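/- arXiv:1610.10031 — 2 statements merged into one kernel-verified Lean document; each statement's English description precedes it below -/
import Mathlib

section
/- Let L ≥ 1, M ≥ 1 be integers and let H : ℝ^L → ℝ^L be β-Lipschitz with respect to the sup norm ‖·‖∞. On a probability space with filtration (F_n), let (v_n) be an (F_n)-martingale difference sequence in ℝ^L (v_n is F_{n+1}-measurable with E[v_n | F_n] = 0) satisfying the coordinatewise bound |v_n(i)| ≤ √Γ / M almost surely for every coordinate i and some constant Γ > 0. Define the stochastic process x_{n+1} = x_n + (1/M) H(x_n) + v_n and the deterministic mean field process x̄_{n+1} = x̄_n + (1/M) H(x̄_n) with the same initial condition x̄_0 = x_0. Then for every constant c₁ > 0 there exist positive constants C₁ and C₂, depending only on β, Γ, c₁ and L, such that for the horizon N = ⌈c₁ M⌉ and every ε > 0: P( max_{0 ≤ n ≤ N} ‖x̄_n − x_n‖∞ ≥ ε ) ≤ C₁ exp(−C₂ ε² M). -/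
open MeasureTheory Finset Real
open scoped NNReal ENNReal

set_option maxHeartbeats 1000000

/-- Pointwise convexity bound: for `|w| ≤ b`, `exp (t*w) ≤ cosh (t*b) + (sinh (t*b)/b) * w`. -/
lemma mfda_exp_le_cosh_add (t : ℝ) {b w : ℝ} (hb : 0 < b) (hw : |w| ≤ b) :
    Real.exp (t * w) ≤ Real.cosh (t * b) + (Real.sinh (t * b) / b) * w := by
  obtain ⟨hw1, hw2⟩ := abs_le.mp hw
  have h1 : (0:ℝ) ≤ (b - w) / (2 * b) := by
    apply div_nonneg (by linarith) (by linarith)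
  have h2 : (0:ℝ) ≤ (b + w) / (2 * b) := by
    apply div_nonneg (by linarith) (by linarith)
  have hsum : (b - w) / (2 * b) + (b + w) / (2 * b) = 1 := by field_simp; ring
  have hcvx := convexOn_exp.2 (Set.mem_univ (t * (-b))) (Set.mem_univ (t * b)) h1 h2 hsum
  simp only [smul_eq_mul] at hcvx
  have harg : (b - w) / (2 * b) * (t * (-b)) + (b + w) / (2 * b) * (t * b) = t * w := by
    field_simp; ring
  rw [harg] at hcvx
  refine hcvx.trans (le_of_eq ?_)
  rw [Real.cosh_eq, Real.sinh_eq, mul_neg, Real.exp_neg]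
  field_simp
  ring

/-- One-sided maximal Azuma–Hoeffding bound via Doob's maximal inequality. -/
lemma mfda_one_sided_azuma
    {Ω : Type} {m0 : MeasurableSpace Ω} {μ : Measure Ω} [IsProbabilityMeasure μ]
    (ℱ : Filtration ℕ m0) (w : ℕ → Ω → ℝ) {b : ℝ} (hb : 0 < b)
    (hmeas : ∀ n, StronglyMeasurable[ℱ (n + 1)] (w n))
    (hint : ∀ n, Integrable (w n) μ)
    (hcond : ∀ n, μ[w n | ℱ n] =ᵐ[μ] 0)
    (hbd : ∀ n, ∀ᵐ ω ∂μ, |w n ω| ≤ b)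
    {l : ℝ} (hl : 0 < l) (a : ℝ) (N : ℕ) :
    μ {ω | ∃ k ≤ N, a ≤ ∑ j ∈ Finset.range k, w j ω} ≤
      ENNReal.ofReal (Real.exp (-(l * a)) * Real.cosh (l * b) ^ N) := by
  classical
  set S : ℕ → Ω → ℝ := fun k ω => ∑ j ∈ Finset.range k, w j ω with hS_def
  have hS : ∀ k, StronglyMeasurable[ℱ k] (S k) := by
    intro k
    induction k with
    | zero =>
      have : S 0 = fun _ => (0 : ℝ) := by funext ω; simp [hS_def]
      rw [this]; exact stronglyMeasurable_const
    | succ k ih =>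
      have : S (k + 1) = fun ω => S k ω + w k ω := by
        funext ω; simp [hS_def, Finset.sum_range_succ]
      rw [this]
      exact ((ih.mono (ℱ.mono (Nat.le_succ k))).add (hmeas k))
  set f : ℕ → Ω → ℝ := fun k ω => Real.exp (l * S k ω) with hf_def
  have hf_meas : ∀ k, StronglyMeasurable[ℱ k] (f k) := fun k =>
    Real.continuous_exp.comp_stronglyMeasurable (stronglyMeasurable_const.mul (hS k))
  have hf_pos : ∀ k ω, 0 < f k ω := fun k ω => Real.exp_pos _
  have hSbd : ∀ k, ∀ᵐ ω ∂μ, |S k ω| ≤ k * b := by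
    intro k
    filter_upwards [ae_all_iff.2 hbd] with ω hω
    calc |S k ω| ≤ ∑ j ∈ Finset.range k, |w j ω| := Finset.abs_sum_le_sum_abs _ _
      _ ≤ ∑ _j ∈ Finset.range k, b := Finset.sum_le_sum fun j _ => hω j
      _ = k * b := by simp [mul_comm]
  have hf_bd : ∀ k, ∀ᵐ ω ∂μ, ‖f k ω‖ ≤ Real.exp (l * (k * b)) := by
    intro k
    filter_upwards [hSbd k] with ω hω
    rw [Real.norm_eq_abs, abs_of_pos (hf_pos k ω)]
    exact Real.exp_le_exp.2 (mul_le_mul_of_nonneg_left ((abs_le.mp hω).2) hl.le)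
  have hf_int : ∀ k, Integrable (f k) μ := by
    intro k
    exact Integrable.mono' (integrable_const _)
      ((hf_meas k).mono (ℱ.le k)).aestronglyMeasurable (hf_bd k)
  have hfw_int : ∀ n, Integrable (f n * w n) μ := fun n =>
    (hint n).bdd_mul ((hf_meas n).mono (ℱ.le n)).aestronglyMeasurable (hf_bd n)
  have hzero : ∀ n, μ[f n * w n | ℱ n] =ᵐ[μ] 0 := by
    intro n
    have hpull := condExp_stronglyMeasurable_mul_of_bound (ℱ.le n) (hf_meas n) (hint n)
      _ (hf_bd n)
    refine hpull.trans ?_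
    filter_upwards [hcond n] with ω hω
    simp only [Pi.mul_apply]
    rw [hω]
    simp
  have hSucc : ∀ n ω, f (n + 1) ω = f n ω * Real.exp (l * w n ω) := by
    intro n ω
    simp only [hf_def, hS_def, Finset.sum_range_succ, mul_add, Real.exp_add]
  have hstep : ∀ n, f n ≤ᵐ[μ] μ[f (n + 1) | ℱ n] := by
    intro n
    have hg_int : Integrable (f n + l • (f n * w n)) μ :=
      (hf_int n).add ((hfw_int n).smul l)
    have h1 : (f n + l • (f n * w n)) ≤ᵐ[μ] f (n + 1) := by
      refine Filter.Eventually.of_forall fun ω => ?_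
      have h1x : 1 + l * w n ω ≤ Real.exp (l * w n ω) := by
        have := Real.add_one_le_exp (l * w n ω); linarith
      have hmul := mul_le_mul_of_nonneg_left h1x (hf_pos n ω).le
      simp only [Pi.add_apply, Pi.smul_apply, Pi.mul_apply, smul_eq_mul, hSucc n ω]
      nlinarith [hf_pos n ω]
    have h2 : μ[f n + l • (f n * w n) | ℱ n] =ᵐ[μ] f n := by
      refine (condExp_add (hf_int n) ((hfw_int n).smul l) (ℱ n)).trans ?_
      have ha : μ[f n | ℱ n] = f n :=
        condExp_of_stronglyMeasurable (ℱ.le n) (hf_meas n) (hf_int n)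
      have hb' : μ[l • (f n * w n) | ℱ n] =ᵐ[μ] (0 : Ω → ℝ) := by
        refine (condExp_smul l (f n * w n) (ℱ n)).trans ?_
        filter_upwards [hzero n] with ω hω
        simp only [Pi.smul_apply, hω]
        simp
      filter_upwards [hb'] with ω hω
      simp only [Pi.add_apply, ha, hω]
      simp
    have h3 := condExp_mono (m := ℱ n) hg_int (hf_int (n + 1)) h1
    filter_upwards [h2, h3] with ω h2ω h3ω
    rw [← h2ω]; exact h3ω
  have hadp : StronglyAdapted ℱ f := fun k => hf_meas k
  have hsub : Submartingale f ℱ μ := submartingale_nat hadp hf_int hstep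
  have hmgf : ∀ n, ∫ ω, f n ω ∂μ ≤ Real.cosh (l * b) ^ n := by
    intro n
    induction n with
    | zero =>
      have h0 : f 0 = fun _ => (1 : ℝ) := by
        funext ω; simp [hf_def, hS_def]
      rw [h0]
      simp
    | succ n ih =>
      have hptwise : f (n + 1) ≤ᵐ[μ]
          (Real.cosh (l * b)) • f n + (Real.sinh (l * b) / b) • (f n * w n) := by
        filter_upwards [hbd n] with ω hω
        have hexp := mfda_exp_le_cosh_add l hb hω
        have hfn := (hf_pos n ω).le
        have hmul := mul_le_mul_of_nonneg_left hexp hfn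
        simp only [Pi.add_apply, Pi.smul_apply, Pi.mul_apply, smul_eq_mul, hSucc n ω]
        nlinarith
      have hintfw : ∫ ω, (f n * w n) ω ∂μ = 0 := by
        rw [← integral_condExp (ℱ.le n)]
        rw [integral_congr_ae (hzero n)]
        simp
      calc ∫ ω, f (n + 1) ω ∂μ
          ≤ ∫ ω, ((Real.cosh (l * b)) • f n
              + (Real.sinh (l * b) / b) • (f n * w n)) ω ∂μ :=
            integral_mono_ae (hf_int (n + 1))
              (((hf_int n).smul _).add ((hfw_int n).smul _)) hptwise
        _ = Real.cosh (l * b) * ∫ ω, f n ω ∂μ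
              + (Real.sinh (l * b) / b) * ∫ ω, (f n * w n) ω ∂μ := by
            simp only [Pi.add_apply, Pi.smul_apply, smul_eq_mul]
            rw [integral_add (((hf_int n).smul (Real.cosh (l * b))).congr ?_)
              (((hfw_int n).smul (Real.sinh (l * b) / b)).congr ?_)]
            · rw [integral_const_mul, integral_const_mul]
            · exact Filter.Eventually.of_forall fun ω => by simp [smul_eq_mul]
            · exact Filter.Eventually.of_forall fun ω => by simp [smul_eq_mul]
        _ = Real.cosh (l * b) * ∫ ω, f n ω ∂μ := by rw [hintfw]; ring
        _ ≤ Real.cosh (l * b) * Real.cosh (l * b) ^ n :=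
            mul_le_mul_of_nonneg_left ih (Real.cosh_pos _).le
        _ = Real.cosh (l * b) ^ (n + 1) := by ring
  set E : ℝ := Real.exp (l * a) with hE_def
  have hE_pos : 0 < E := Real.exp_pos _
  have hcoe : ((E.toNNReal : ℝ≥0) : ℝ) = E := Real.coe_toNNReal E hE_pos.le
  have hmax := maximal_ineq hsub (fun k ω => (hf_pos k ω).le) (ε := E.toNNReal) N
  set A : Set Ω := {ω | ((E.toNNReal : ℝ≥0) : ℝ) ≤
      (Finset.range (N + 1)).sup' Finset.nonempty_range_add_one fun k => f k ω} with hA_def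
  have hsetle : ∫ ω in A, f N ω ∂μ ≤ ∫ ω, f N ω ∂μ :=
    setIntegral_le_integral (hf_int N)
      (Filter.Eventually.of_forall fun ω => (hf_pos N ω).le)
  have hmax2 : (ENNReal.ofReal E) * μ A ≤ ENNReal.ofReal (Real.cosh (l * b) ^ N) := by
    have h1 : (ENNReal.ofReal E) * μ A = E.toNNReal • μ A := by
      rw [ENNReal.smul_def, smul_eq_mul, ENNReal.ofReal]
    rw [h1]
    exact hmax.trans (ENNReal.ofReal_le_ofReal (hsetle.trans (hmgf N)))
  have hincl : {ω | ∃ k ≤ N, a ≤ S k ω} ⊆ A := by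
    intro ω hω
    obtain ⟨k, hk, hak⟩ := hω
    have h1 : E ≤ f k ω := Real.exp_le_exp.2 (mul_le_mul_of_nonneg_left hak hl.le)
    have h2 : f k ω ≤ (Finset.range (N + 1)).sup'
        Finset.nonempty_range_add_one fun j => f j ω :=
      Finset.le_sup' (f := fun j => f j ω) (Finset.mem_range.mpr (Nat.lt_succ_of_le hk))
    simp only [hA_def, Set.mem_setOf_eq, hcoe]
    exact h1.trans h2
  have hdiv : Real.exp (-(l * a)) * Real.cosh (l * b) ^ N
      = (Real.cosh (l * b) ^ N) / E := by
    rw [hE_def, Real.exp_neg]; ring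
  calc μ {ω | ∃ k ≤ N, a ≤ S k ω} ≤ μ A := measure_mono hincl
    _ ≤ ENNReal.ofReal (Real.exp (-(l * a)) * Real.cosh (l * b) ^ N) := by
        rw [hdiv, ENNReal.ofReal_div_of_pos hE_pos]
        rw [ENNReal.le_div_iff_mul_le
          (Or.inl (ENNReal.ofReal_pos.mpr hE_pos).ne') (Or.inl ENNReal.ofReal_ne_top)]
        rw [mul_comm]
        exact hmax2

/-- Two-sided maximal Azuma–Hoeffding bound. -/
lemma mfda_two_sided_azuma
    {Ω : Type} {m0 : MeasurableSpace Ω} {μ : Measure Ω} [IsProbabilityMeasure μ]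
    (ℱ : Filtration ℕ m0) (w : ℕ → Ω → ℝ) {b : ℝ} (hb : 0 < b)
    (hmeas : ∀ n, StronglyMeasurable[ℱ (n + 1)] (w n))
    (hint : ∀ n, Integrable (w n) μ)
    (hcond : ∀ n, μ[w n | ℱ n] =ᵐ[μ] 0)
    (hbd : ∀ n, ∀ᵐ ω ∂μ, |w n ω| ≤ b)
    {l : ℝ} (hl : 0 < l) (a : ℝ) (N : ℕ) :
    μ {ω | ∃ k ≤ N, a ≤ |∑ j ∈ Finset.range k, w j ω|} ≤
      ENNReal.ofReal (2 * (Real.exp (-(l * a)) * Real.cosh (l * b) ^ N)) := by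
  have hneg_meas : ∀ n, StronglyMeasurable[ℱ (n + 1)] (fun ω => -(w n ω)) :=
    fun n => (hmeas n).neg
  have hneg_int : ∀ n, Integrable (fun ω => -(w n ω)) μ := fun n => (hint n).neg
  have hneg_cond : ∀ n, μ[(fun ω => -(w n ω)) | ℱ n] =ᵐ[μ] 0 := by
    intro n
    have : (fun ω => -(w n ω)) = -(w n) := rfl
    rw [this]
    refine (condExp_neg (w n) (ℱ n)).trans ?_
    filter_upwards [hcond n] with ω hω
    simp only [Pi.neg_apply, hω]
    simp
  have hneg_bd : ∀ n, ∀ᵐ ω ∂μ, |(-(w n ω))| ≤ b := by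
    intro n; filter_upwards [hbd n] with ω hω; rwa [abs_neg]
  have hplus := mfda_one_sided_azuma ℱ w hb hmeas hint hcond hbd hl a N
  have hminus := mfda_one_sided_azuma ℱ (fun n ω => -(w n ω)) hb hneg_meas hneg_int
    hneg_cond hneg_bd hl a N
  have hincl : {ω | ∃ k ≤ N, a ≤ |∑ j ∈ Finset.range k, w j ω|} ⊆
      {ω | ∃ k ≤ N, a ≤ ∑ j ∈ Finset.range k, w j ω} ∪
      {ω | ∃ k ≤ N, a ≤ ∑ j ∈ Finset.range k, -(w j ω)} := by
    intro ω hω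
    obtain ⟨k, hk, hak⟩ := hω
    rcases le_abs.mp hak with h | h
    · exact Or.inl ⟨k, hk, h⟩
    · refine Or.inr ⟨k, hk, ?_⟩
      rw [← Finset.sum_neg_distrib] at h
      exact h
  calc μ {ω | ∃ k ≤ N, a ≤ |∑ j ∈ Finset.range k, w j ω|}
      ≤ μ ({ω | ∃ k ≤ N, a ≤ ∑ j ∈ Finset.range k, w j ω} ∪
          {ω | ∃ k ≤ N, a ≤ ∑ j ∈ Finset.range k, -(w j ω)}) := measure_mono hincl
    _ ≤ μ {ω | ∃ k ≤ N, a ≤ ∑ j ∈ Finset.range k, w j ω} +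
          μ {ω | ∃ k ≤ N, a ≤ ∑ j ∈ Finset.range k, -(w j ω)} := measure_union_le _ _
    _ ≤ ENNReal.ofReal (Real.exp (-(l * a)) * Real.cosh (l * b) ^ N) +
          ENNReal.ofReal (Real.exp (-(l * a)) * Real.cosh (l * b) ^ N) :=
        add_le_add hplus hminus
    _ = ENNReal.ofReal (2 * (Real.exp (-(l * a)) * Real.cosh (l * b) ^ N)) := by
        rw [← ENNReal.ofReal_add (by positivity) (by positivity)]
        ring_nf

/-- Maximal Azuma–Hoeffding with optimized exponent. -/
lemma mfda_azuma_final
    {Ω : Type} {m0 : MeasurableSpace Ω} {μ : Measure Ω} [IsProbabilityMeasure μ]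
    (ℱ : Filtration ℕ m0) (w : ℕ → Ω → ℝ) {b : ℝ} (hb : 0 < b)
    (hmeas : ∀ n, StronglyMeasurable[ℱ (n + 1)] (w n))
    (hint : ∀ n, Integrable (w n) μ)
    (hcond : ∀ n, μ[w n | ℱ n] =ᵐ[μ] 0)
    (hbd : ∀ n, ∀ᵐ ω ∂μ, |w n ω| ≤ b)
    {a : ℝ} (ha : 0 < a) {N : ℕ} (hN : 1 ≤ N) :
    μ {ω | ∃ k ≤ N, a ≤ |∑ j ∈ Finset.range k, w j ω|} ≤
      ENNReal.ofReal (2 * Real.exp (-(a ^ 2 / (2 * N * b ^ 2)))) := by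
  have hNpos : (0 : ℝ) < N := by exact_mod_cast hN
  set l : ℝ := a / (N * b ^ 2) with hl_def
  have hl : 0 < l := by positivity
  refine (mfda_two_sided_azuma ℱ w hb hmeas hint hcond hbd hl a N).trans ?_
  apply ENNReal.ofReal_le_ofReal
  have h1 : Real.cosh (l * b) ^ N ≤ Real.exp ((l * b) ^ 2 / 2) ^ N :=
    pow_le_pow_left₀ (Real.cosh_pos _).le (Real.cosh_le_exp_half_sq _) N
  have h2 : Real.exp ((l * b) ^ 2 / 2) ^ N = Real.exp (N * ((l * b) ^ 2 / 2)) :=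
    (Real.exp_nat_mul _ N).symm
  have key : -(l * a) + N * ((l * b) ^ 2 / 2) = -(a ^ 2 / (2 * N * b ^ 2)) := by
    rw [hl_def]
    field_simp
    ring
  calc 2 * (Real.exp (-(l * a)) * Real.cosh (l * b) ^ N)
      ≤ 2 * (Real.exp (-(l * a)) * Real.exp (N * ((l * b) ^ 2 / 2))) := by
        rw [← h2]
        have := mul_le_mul_of_nonneg_left h1 (Real.exp_pos (-(l * a))).le
        linarith
    _ = 2 * Real.exp (-(l * a) + N * ((l * b) ^ 2 / 2)) := by rw [Real.exp_add]
    _ = 2 * Real.exp (-(a ^ 2 / (2 * N * b ^ 2))) := by rw [key]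

/-- Deterministic discrete Gronwall estimate for the error process. -/
lemma mfda_gronwall {L M : ℕ} (hM : 1 ≤ M) {β : ℝ} (hβ : 0 ≤ β)
    (H : (Fin L → ℝ) → (Fin L → ℝ))
    (hH : ∀ y z, ‖H y - H z‖ ≤ β * ‖y - z‖)
    (u y : ℕ → (Fin L → ℝ)) (v : ℕ → (Fin L → ℝ))
    (hy : ∀ n, y (n + 1) = y n + (1 / (M : ℝ)) • H (y n) + v n)
    (hu : ∀ n, u (n + 1) = u n + (1 / (M : ℝ)) • H (u n))
    (h0 : y 0 = u 0)
    {a : ℝ} (ha : 0 ≤ a) (n : ℕ) :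
    (∀ k ≤ n, ‖∑ j ∈ Finset.range k, v j‖ ≤ a) →
    ‖u n - y n + ∑ j ∈ Finset.range n, v j‖ ≤ ((1 + β / M) ^ n - 1) * a := by
  have hMpos : (0 : ℝ) < M := by exact_mod_cast hM
  have hq : (0 : ℝ) ≤ 1 + β / M := by positivity
  induction n with
  | zero =>
    intro _
    simp [h0]
  | succ n ih =>
    intro hS
    have ihn := ih fun k hk => hS k (hk.trans (Nat.le_succ n))
    have hSn := hS n (Nat.le_succ n)
    have key : u (n + 1) - y (n + 1) + ∑ j ∈ Finset.range (n + 1), v j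
        = (u n - y n + ∑ j ∈ Finset.range n, v j)
          + (1 / (M : ℝ)) • (H (u n) - H (y n)) := by
      rw [hy n, hu n, Finset.sum_range_succ, smul_sub]
      abel
    have hnorm1 : ‖u n - y n‖ ≤ ‖u n - y n + ∑ j ∈ Finset.range n, v j‖ + a := by
      calc ‖u n - y n‖
          = ‖(u n - y n + ∑ j ∈ Finset.range n, v j) - ∑ j ∈ Finset.range n, v j‖ := by
            congr 1; abel
        _ ≤ ‖u n - y n + ∑ j ∈ Finset.range n, v j‖ + ‖∑ j ∈ Finset.range n, v j‖ :=
            norm_sub_le _ _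
        _ ≤ _ := by linarith
    have hsmul : ‖(1 / (M : ℝ)) • (H (u n) - H (y n))‖ ≤ (β / M) * ‖u n - y n‖ := by
      rw [norm_smul, Real.norm_eq_abs, abs_of_pos (by positivity : (0:ℝ) < 1 / (M:ℝ))]
      calc 1 / (M : ℝ) * ‖H (u n) - H (y n)‖
          ≤ 1 / (M : ℝ) * (β * ‖u n - y n‖) :=
            mul_le_mul_of_nonneg_left (hH _ _) (by positivity)
        _ = (β / M) * ‖u n - y n‖ := by ring
    have hpow : (1 + β / M) ^ (n + 1) = (1 + β / M) * (1 + β / M) ^ n := by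
      rw [pow_succ]; ring
    have hpow1 : (1 : ℝ) ≤ (1 + β / M) ^ n :=
      one_le_pow₀ (le_add_of_nonneg_right (by positivity))
    calc ‖u (n + 1) - y (n + 1) + ∑ j ∈ Finset.range (n + 1), v j‖
          ≤ ‖u n - y n + ∑ j ∈ Finset.range n, v j‖
            + ‖(1 / (M : ℝ)) • (H (u n) - H (y n))‖ := by rw [key]; exact norm_add_le _ _
        _ ≤ ((1 + β / M) ^ n - 1) * a + (β / M) * (((1 + β / M) ^ n - 1) * a + a) := by
            have h3 : ‖u n - y n‖ ≤ ((1 + β / M) ^ n - 1) * a + a := by linarith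
            have h4 := hsmul.trans (mul_le_mul_of_nonneg_left h3 (by positivity))
            linarith
        _ ≤ ((1 + β / M) ^ (n + 1) - 1) * a := by
            rw [hpow]; nlinarith [pow_nonneg hq n]

/-- **Mean field dynamics approximation (Theorem 1).**
For a β-Lipschitz (in sup norm) drift `H`, a martingale difference noise `v`
with coordinatewise almost-sure bound `√Γ / M`, the stochastic process
`x (n+1) = x n + (1/M) • H (x n) + v n` stays within `ε` of the deterministic
mean field trajectory `x̄ (n+1) = x̄ n + (1/M) • H (x̄ n)` (same initial condition)
for a horizon `N = ⌈c₁ M⌉` steps, except with probability at most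
`C₁ exp (−C₂ ε² M)`, where `C₁, C₂ > 0` depend only on `β, Γ, c₁` (and `L`). -/
theorem mean_field_dynamics_approximation
    (L : ℕ) (hL : 1 ≤ L) (β Γ : ℝ) (hΓ : 0 < Γ) (c₁ : ℝ) (hc₁ : 0 < c₁) :
    ∃ C₁ > (0 : ℝ), ∃ C₂ > (0 : ℝ),
      ∀ (M : ℕ), 1 ≤ M →
      ∀ (Ω : Type) (m0 : MeasurableSpace Ω) (μ : Measure Ω),
        IsProbabilityMeasure μ →
      ∀ (ℱ : Filtration ℕ m0)
        (v : ℕ → Ω → (Fin L → ℝ))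
        (x : ℕ → Ω → (Fin L → ℝ))
        (xbar : ℕ → (Fin L → ℝ))
        (H : (Fin L → ℝ) → (Fin L → ℝ)),
        -- H is β-Lipschitz w.r.t. the sup norm (the norm on `Fin L → ℝ`)
        (∀ y z : Fin L → ℝ, ‖H y - H z‖ ≤ β * ‖y - z‖) →
        -- martingale difference sequence: adaptedness, integrability,
        -- vanishing conditional expectation
        (∀ n, StronglyMeasurable[ℱ (n + 1)] (v n)) →
        (∀ n, Integrable (v n) μ) →
        (∀ n (i : Fin L), μ[(fun ω => v n ω i) | ℱ n] =ᵐ[μ] 0) →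
        -- coordinatewise almost sure bound |v n ω i| ≤ √Γ / M
        (∀ n (i : Fin L), ∀ᵐ ω ∂μ, |v n ω i| ≤ Real.sqrt Γ / M) →
        -- stochastic recursion
        (∀ n ω, x (n + 1) ω = x n ω + (1 / (M : ℝ)) • H (x n ω) + v n ω) →
        -- mean field recursion with the same initial condition
        (∀ ω, x 0 ω = xbar 0) →
        (∀ n, xbar (n + 1) = xbar n + (1 / (M : ℝ)) • H (xbar n)) →
        ∀ ε > (0 : ℝ),
          μ {ω | ∃ n ≤ ⌈c₁ * (M : ℝ)⌉₊, ε ≤ ‖xbar n - x n ω‖} ≤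
            ENNReal.ofReal (C₁ * Real.exp (-C₂ * ε ^ 2 * M)) := by
  have hL' : (1 : ℝ) ≤ L := by exact_mod_cast hL
  refine ⟨2 * L, by linarith, Real.exp (-(2 * β * (c₁ + 1))) / (2 * (c₁ + 1) * Γ),
    by positivity, ?_⟩
  intro M hM Ω m0 μ hμ ℱ v x xbar H hH hvm hvi hvc hvb hxrec hx0 hxbarrec ε hε
  -- β is nonnegative
  have : Nonempty (Fin L) := ⟨⟨0, hL⟩⟩
  have hβ : 0 ≤ β := by
    have h := hH 0 (fun _ => (1 : ℝ))
    have hnorm : ‖(0 : Fin L → ℝ) - fun _ => (1 : ℝ)‖ = 1 := by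
      have heq : ((0 : Fin L → ℝ) - fun _ => (1 : ℝ)) = fun _ : Fin L => (-1 : ℝ) := by
        funext i; simp
      rw [heq, pi_norm_const (-1 : ℝ)]
      simp
    rw [hnorm, mul_one] at h
    exact le_trans (norm_nonneg _) h
  have hMpos : (0 : ℝ) < M := by exact_mod_cast Nat.lt_of_lt_of_le Nat.zero_lt_one hM
  have hM1 : (1 : ℝ) ≤ M := by exact_mod_cast hM
  set N : ℕ := ⌈c₁ * (M : ℝ)⌉₊ with hN_def
  have hN1 : 1 ≤ N := Nat.one_le_ceil_iff.mpr (by positivity)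
  have hNpos : (0 : ℝ) < N := by exact_mod_cast hN1
  have hNle : (N : ℝ) ≤ (c₁ + 1) * M := by
    have h := Nat.ceil_lt_add_one (show (0:ℝ) ≤ c₁ * M by positivity)
    rw [← hN_def] at h
    nlinarith
  set b : ℝ := Real.sqrt Γ / M with hb_def
  have hsqrtΓ : 0 < Real.sqrt Γ := Real.sqrt_pos.mpr hΓ
  have hb : 0 < b := by rw [hb_def]; positivity
  set D : ℝ := Real.exp (β * (c₁ + 1)) with hD_def
  have hD1 : 1 ≤ D := by
    rw [hD_def, show (1:ℝ) = Real.exp 0 from Real.exp_zero.symm]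
    exact Real.exp_le_exp.2 (by positivity)
  have hDpos : 0 < D := lt_of_lt_of_le one_pos hD1
  set a : ℝ := ε / D with ha_def
  have ha : 0 < a := by rw [ha_def]; positivity
  -- per-coordinate Azuma bound
  set A : Fin L → Set Ω := fun i =>
    {ω | ∃ k ≤ N, a ≤ |∑ j ∈ Finset.range k, v j ω i|} with hA_def
  have hAi : ∀ i, μ (A i) ≤ ENNReal.ofReal (2 * Real.exp (-(a ^ 2 / (2 * N * b ^ 2)))) := by
    intro i
    refine mfda_azuma_final ℱ (fun n ω => v n ω i) hb
      (fun n => (continuous_apply i).comp_stronglyMeasurable (hvm n))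
      (fun n => ?_) (fun n => hvc n i) (fun n => hvb n i) ha hN1
    refine Integrable.mono' (hvi n).norm
      (((continuous_apply i).comp_stronglyMeasurable
        ((hvm n).mono (ℱ.le (n + 1)))).aestronglyMeasurable) ?_
    exact Filter.Eventually.of_forall fun ω => by
      simpa using norm_le_pi_norm (v n ω) i
  -- event inclusion via Gronwall
  have hincl : {ω | ∃ n ≤ N, ε ≤ ‖xbar n - x n ω‖} ⊆ ⋃ i, A i := by
    intro ω hω
    obtain ⟨n, hn, hεn⟩ := hω
    by_contra hcon
    simp only [Set.mem_iUnion, hA_def, Set.mem_setOf_eq] at hcon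
    push_neg at hcon
    -- hcon : ∀ i k, k ≤ N → |∑ ...| < a
    have hSsmall : ∀ k ≤ N, ‖∑ j ∈ Finset.range k, v j ω‖ < a := by
      intro k hk
      rw [pi_norm_lt_iff ha]
      intro i
      have := hcon i k hk
      rw [Real.norm_eq_abs]
      rw [Finset.sum_apply]
      exact this
    have hgron := mfda_gronwall hM hβ H hH xbar (fun n => x n ω) (fun n => v n ω)
      (fun n => hxrec n ω) hxbarrec (hx0 ω) ha.le n
      (fun k hk => (hSsmall k (hk.trans hn)).le)
    have hq : (0 : ℝ) ≤ 1 + β / M := by positivity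
    have hqpow : (1 + β / M) ^ n ≤ D := by
      calc (1 + β / M) ^ n ≤ Real.exp (β / M) ^ n :=
            pow_le_pow_left₀ hq (by have := Real.add_one_le_exp (β / M); linarith) n
        _ = Real.exp (n * (β / M)) := (Real.exp_nat_mul _ n).symm
        _ ≤ D := by
            rw [hD_def]
            apply Real.exp_le_exp.2
            have hnN : (n : ℝ) ≤ (c₁ + 1) * M :=
              le_trans (by exact_mod_cast hn) hNle
            rw [mul_comm ((n : ℝ)) (β / M), div_mul_eq_mul_div, div_le_iff₀ hMpos]
            nlinarith
    have herr : ‖xbar n - x n ω‖ < (1 + β / M) ^ n * a := by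
      have h1 : ‖xbar n - x n ω‖
          ≤ ‖xbar n - x n ω + ∑ j ∈ Finset.range n, v j ω‖
            + ‖∑ j ∈ Finset.range n, v j ω‖ := by
        have hns := norm_sub_le (xbar n - x n ω + ∑ j ∈ Finset.range n, v j ω)
          (∑ j ∈ Finset.range n, v j ω)
        have heq : (xbar n - x n ω + ∑ j ∈ Finset.range n, v j ω)
            - ∑ j ∈ Finset.range n, v j ω = xbar n - x n ω := by abel
        rw [heq] at hns
        exact hns
      have h2 := hSsmall n hn
      nlinarith [hgron]
    have hfinal : (1 + β / M) ^ n * a ≤ ε := by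
      have : D * a = ε := by
        rw [ha_def]; field_simp
      nlinarith
    linarith
  -- combine
  have hsum : μ {ω | ∃ n ≤ N, ε ≤ ‖xbar n - x n ω‖} ≤
      ∑ i : Fin L, μ (A i) := by
    refine (measure_mono hincl).trans ?_
    exact measure_iUnion_fintype_le μ A
  have hexp_le : Real.exp (-(a ^ 2 / (2 * N * b ^ 2)))
      ≤ Real.exp (-(Real.exp (-(2 * β * (c₁ + 1))) / (2 * (c₁ + 1) * Γ)) * ε ^ 2 * M) := by
    apply Real.exp_le_exp.2
    have hb2 : b ^ 2 = Γ / M ^ 2 := by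
      rw [hb_def, div_pow, Real.sq_sqrt hΓ.le]
    have hD2 : D ^ 2 = Real.exp (2 * β * (c₁ + 1)) := by
      rw [hD_def, ← Real.exp_nat_mul]
      norm_num
      ring_nf
    have hEinv : Real.exp (-(2 * β * (c₁ + 1))) = 1 / D ^ 2 := by
      rw [hD2, Real.exp_neg]
      exact (one_div _).symm
    have ha2 : a ^ 2 = ε ^ 2 / D ^ 2 := by rw [ha_def, div_pow]
    rw [hEinv, ha2, hb2]
    rw [neg_mul, neg_mul, neg_le_neg_iff]
    have hLHS : 1 / D ^ 2 / (2 * (c₁ + 1) * Γ) * ε ^ 2 * (M : ℝ)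
        = ε ^ 2 * M / (D ^ 2 * (2 * (c₁ + 1) * Γ)) := by
      field_simp
    have hRHS : ε ^ 2 / D ^ 2 / (2 * (N : ℝ) * (Γ / (M : ℝ) ^ 2))
        = ε ^ 2 * (M : ℝ) ^ 2 / (D ^ 2 * (2 * N * Γ)) := by
      field_simp
    rw [hLHS, hRHS, div_le_div_iff₀ (by positivity) (by positivity)]
    have hkey := mul_le_mul_of_nonneg_left hNle
      (show (0:ℝ) ≤ ε ^ 2 * M * (D ^ 2 * (2 * Γ)) by positivity)
    linarith [hkey]
  calc μ {ω | ∃ n ≤ N, ε ≤ ‖xbar n - x n ω‖}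
      ≤ ∑ i : Fin L, μ (A i) := hsum
    _ ≤ ∑ _i : Fin L, ENNReal.ofReal (2 * Real.exp (-(a ^ 2 / (2 * N * b ^ 2)))) :=
        Finset.sum_le_sum fun i _ => hAi i
    _ = (L : ℝ≥0∞) * ENNReal.ofReal (2 * Real.exp (-(a ^ 2 / (2 * N * b ^ 2)))) := by
        rw [Finset.sum_const, Finset.card_univ, Fintype.card_fin, nsmul_eq_mul]
    _ ≤ ENNReal.ofReal (2 * L * Real.exp
          (-(Real.exp (-(2 * β * (c₁ + 1))) / (2 * (c₁ + 1) * Γ)) * ε ^ 2 * M)) := by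
        rw [← ENNReal.ofReal_natCast L, ← ENNReal.ofReal_mul (by positivity)]
        apply ENNReal.ofReal_le_ofReal
        calc (L : ℝ) * (2 * Real.exp (-(a ^ 2 / (2 * N * b ^ 2))))
            ≤ (L : ℝ) * (2 * Real.exp (-(Real.exp (-(2 * β * (c₁ + 1)))
                / (2 * (c₁ + 1) * Γ)) * ε ^ 2 * M)) := by
              have : (0:ℝ) ≤ (L : ℝ) := by positivity
              nlinarith [hexp_le, Real.exp_pos (-(a ^ 2 / (2 * N * b ^ 2)))]
          _ = 2 * L * Real.exp (-(Real.exp (-(2 * β * (c₁ + 1)))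
                / (2 * (c₁ + 1) * Γ)) * ε ^ 2 * M) := by ring
end

section
/- Fix an integer N ≥ 1, parameters p₁, p₂ with 0 < p₂ < p₁ ≤ 1, and an integer k₀ with N(2−p₂)/k₀ ≤ 1. For each p ∈ {p₁, p₂} and any common initial probability vector ρ₀ on {1,…,N, N⁺}, define recursively ρ_q(p) = H_{k₀+q−1}(p)ᵀ ρ_{q−1}(p) for q = 1, 2, …, where H_k(p) is the preferential attachment transition matrix. Then for every q ≥ 1 the degree distribution is first-order stochastically decreasing in p: ρ_q(p₂) first-order stochastically dominates ρ_q(p₁), i.e. ρ_q(p₁) ≤_sd ρ_q(p₂). -/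
open Finset

/-- First-order stochastic dominance on distributions over `Fin X`
(states ordered by the `Fin` order): `ρ₁ ≤_sd ρ₂` iff every tail sum of `ρ₁`
is at most the corresponding tail sum of `ρ₂`. -/
def sdLE {X : ℕ} (ρ₁ ρ₂ : Fin X → ℝ) : Prop :=
  ∀ j : Fin X,
    ∑ i ∈ Finset.univ.filter (fun i => j ≤ i), ρ₁ i ≤
      ∑ i ∈ Finset.univ.filter (fun i => j ≤ i), ρ₂ i

/-- Preferential attachment transition matrix `H_k(p)` on the states
`{1, …, N, N⁺}` (encoded as `Fin (N+1)`, where index `i` stands for degree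
`i+1` and the last index `N` is the absorbing compound state `N⁺`):
`H_{i,i} = 1 − i(2−p)/k`, `H_{i,i+1} = i(2−p)/k` for degrees `i = 1, …, N`,
`H_{N⁺,N⁺} = 1`, and all other entries `0`. -/
noncomputable def Hmat (N k : ℕ) (p : ℝ) : Fin (N + 1) → Fin (N + 1) → ℝ :=
  fun i j =>
    if i.val = N then (if j = i then 1 else 0)
    else if j = i then 1 - ((i.val : ℝ) + 1) * (2 - p) / (k : ℝ)
    else if j.val = i.val + 1 then ((i.val : ℝ) + 1) * (2 - p) / (k : ℝ)
    else 0

lemma rowTail (N k : ℕ) (p : ℝ) (l j : Fin (N+1)) :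
    ∑ i ∈ univ.filter (fun i => j ≤ i), Hmat N k p l i =
      (if j ≤ l then 1 else 0) +
      (if l.val + 1 = j.val then ((l.val : ℝ) + 1) * (2 - p) / (k : ℝ) else 0) := by
  by_cases hl : l.val = N
  · have h2 : ¬ (l.val + 1 = j.val) := by have := j.isLt; omega
    have h2' : ¬ (N + 1 = j.val) := by omega
    simp only [Hmat, hl, if_pos rfl, h2, h2', if_false, add_zero, ite_true, eq_self_iff_true]
    rw [Finset.sum_ite_eq' _ l (fun _ => (1:ℝ))]
    simp
  · have hll : l.val < N := by have := l.isLt; omega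
    set a : ℝ := ((l.val : ℝ) + 1) * (2 - p) / (k : ℝ) with ha
    have hlt : l.val + 1 < N + 1 := by omega
    have hne : (⟨l.val + 1, hlt⟩ : Fin (N+1)) ≠ l := by
      intro h
      have := congrArg Fin.val h
      simp only [] at this
      omega
    have hsplit : ∀ i : Fin (N+1), Hmat N k p l i =
        (if i = l then 1 - a else 0) + (if i = (⟨l.val + 1, hlt⟩ : Fin (N+1)) then a else 0) := by
      intro i
      simp only [Hmat, hl, if_false, ← ha]
      by_cases h1 : i = l
      · subst h1; simp [hne.symm]
      · by_cases h2 : i.val = l.val + 1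
        · have h3 : i = (⟨l.val + 1, hlt⟩ : Fin (N+1)) := Fin.ext h2
          subst h3
          rw [if_neg hne, if_neg hne]
          ring
        · have h3 : ¬ (i = (⟨l.val + 1, hlt⟩ : Fin (N+1))) := by
            intro h; exact h2 (congrArg Fin.val h)
          simp [h1, h2, h3]
    rw [Finset.sum_congr rfl (fun i _ => hsplit i), Finset.sum_add_distrib,
      Finset.sum_ite_eq' _ l (fun _ => 1 - a),
      Finset.sum_ite_eq' _ (⟨l.val + 1, hlt⟩ : Fin (N+1)) (fun _ => a)]
    simp only [mem_filter, mem_univ, true_and]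
    have hjl1 : (j ≤ (⟨l.val + 1, hlt⟩ : Fin (N+1))) ↔ (j ≤ l ∨ l.val + 1 = j.val) := by
      simp only [Fin.le_def]
      omega
    by_cases h1 : j ≤ l
    · have h2 : ¬ (l.val + 1 = j.val) := by
        have := Fin.le_def.mp h1; omega
      have h3 : j ≤ (⟨l.val + 1, hlt⟩ : Fin (N+1)) := hjl1.mpr (Or.inl h1)
      simp [h1, h2, h3]
    · by_cases h2 : l.val + 1 = j.val
      · have h3 : j ≤ (⟨l.val + 1, hlt⟩ : Fin (N+1)) := hjl1.mpr (Or.inr h2)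
        simp [h1, h2, h3]
      · have h3 : ¬ j ≤ (⟨l.val + 1, hlt⟩ : Fin (N+1)) := fun h => (hjl1.mp h).elim h1 h2
        simp [h1, h2, h3]

lemma step_tail (N k : ℕ) (p : ℝ) (ρ : Fin (N+1) → ℝ) (j : Fin (N+1)) :
    ∑ i ∈ univ.filter (fun i => j ≤ i), (∑ l, ρ l * Hmat N k p l i) =
      (∑ i ∈ univ.filter (fun i => j ≤ i), ρ i) +
      (if 1 ≤ j.val then
        (j.val : ℝ) * (2 - p) / (k : ℝ) *
          ρ ⟨j.val - 1, lt_of_le_of_lt (Nat.sub_le _ _) j.isLt⟩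
       else 0) := by
  rw [Finset.sum_comm]
  have h1 : ∀ l : Fin (N+1), ∑ i ∈ univ.filter (fun i => j ≤ i), ρ l * Hmat N k p l i
      = (if j ≤ l then ρ l else 0) +
        (if l.val + 1 = j.val then ρ l * (((l.val : ℝ) + 1) * (2 - p) / (k : ℝ)) else 0) := by
    intro l
    rw [← Finset.mul_sum, rowTail, mul_add]
    congr 1 <;> [skip; skip] <;> split <;> simp [mul_comm]
  rw [Finset.sum_congr rfl (fun l _ => h1 l), Finset.sum_add_distrib]
  congr 1
  · rw [Finset.sum_filter]
  · by_cases hj : 1 ≤ j.val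
    · have hlt : j.val - 1 < N + 1 := lt_of_le_of_lt (Nat.sub_le _ _) j.isLt
      have heq : ∀ l : Fin (N+1), (l.val + 1 = j.val) ↔ l = (⟨j.val - 1, hlt⟩ : Fin (N+1)) := by
        intro l
        rw [Fin.ext_iff]
        simp only []
        omega
      rw [if_pos hj]
      rw [Finset.sum_congr rfl (fun l _ => by rw [if_congr (heq l) rfl rfl]),
        Finset.sum_ite_eq' _ (⟨j.val - 1, hlt⟩ : Fin (N+1))
          (fun l => ρ l * (((l.val : ℝ) + 1) * (2 - p) / (k : ℝ)))]
      simp only [mem_univ, if_true]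
      have hcast : ((j.val - 1 : ℕ) : ℝ) = (j.val : ℝ) - 1 := by
        have : 1 ≤ j.val := hj
        push_cast [this]
        ring
      rw [hcast]
      ring
    · have : ∀ l : Fin (N+1), ¬ (l.val + 1 = j.val) := by intro l; omega
      simp [this, hj]

lemma tail_pred (N : ℕ) (ρ : Fin (N+1) → ℝ) (j : Fin (N+1)) (h : 1 ≤ j.val) :
    ∑ i ∈ univ.filter (fun i =>
        (⟨j.val - 1, lt_of_le_of_lt (Nat.sub_le _ _) j.isLt⟩ : Fin (N+1)) ≤ i), ρ i =
      ρ ⟨j.val - 1, lt_of_le_of_lt (Nat.sub_le _ _) j.isLt⟩ +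
        ∑ i ∈ univ.filter (fun i => j ≤ i), ρ i := by
  have hlt : j.val - 1 < N + 1 := lt_of_le_of_lt (Nat.sub_le _ _) j.isLt
  have hset : univ.filter (fun i => (⟨j.val - 1, hlt⟩ : Fin (N+1)) ≤ i) =
      insert (⟨j.val - 1, hlt⟩ : Fin (N+1)) (univ.filter (fun i => j ≤ i)) := by
    ext i
    simp only [mem_filter, mem_univ, true_and, mem_insert, Fin.le_def, Fin.ext_iff]
    omega
  rw [hset, Finset.sum_insert]
  simp only [mem_filter, mem_univ, true_and, Fin.le_def]
  omega

lemma Hmat_nonneg (N k : ℕ) (hk : 0 < k) (p : ℝ) (hp : 0 ≤ 2 - p)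
    (hc : (N : ℝ) * (2 - p) / (k : ℝ) ≤ 1) (i j : Fin (N+1)) :
    0 ≤ Hmat N k p i j := by
  have hk' : (0:ℝ) < k := by exact_mod_cast hk
  unfold Hmat
  split
  · split <;> norm_num
  · rename_i hi
    have hiN : (i.val : ℝ) + 1 ≤ N := by
      have h2 : i.val + 1 ≤ N := by have := i.isLt; omega
      exact_mod_cast h2
    have hnn : 0 ≤ ((i.val:ℝ)+1) * (2-p) / k :=
      div_nonneg (mul_nonneg (by positivity) hp) hk'.le
    split
    · have hle : ((i.val:ℝ)+1) * (2-p) / k ≤ (N:ℝ)*(2-p)/k := by gcongr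
      linarith
    · split
      · exact hnn
      · norm_num

/-- **Theorem 3, part 1 (cmp_gr).** In the preferential attachment model with
vertex-addition probability `p`, started from a common initial degree
distribution `ρ₀` and evolving by `ρ_q(p) = H_{k₀+q−1}(p)ᵀ ρ_{q−1}(p)`, the
degree distribution is first-order stochastically decreasing in `p`: for
`0 < p₂ < p₁ ≤ 1`, `ρ_q(p₁) ≤_sd ρ_q(p₂)` for all `q ≥ 1`. -/
theorem degree_distribution_stochastically_decreasing_in_p
    (N : ℕ) (hN : 1 ≤ N) (p₁ p₂ : ℝ)
    (hp₂ : 0 < p₂) (hpp : p₂ < p₁) (hp₁ : p₁ ≤ 1)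
    (k₀ : ℕ) (hk₀ : 1 ≤ k₀) (hcond : (N : ℝ) * (2 - p₂) / (k₀ : ℝ) ≤ 1)
    (ρ₀ : Fin (N + 1) → ℝ) (hρ₀nn : ∀ i, 0 ≤ ρ₀ i) (hρ₀sum : ∑ i, ρ₀ i = 1)
    (ρseq : ℝ → ℕ → Fin (N + 1) → ℝ)
    (hinit : ∀ p, ρseq p 0 = ρ₀)
    (hrec : ∀ p q, ρseq p (q + 1) =
      fun j => ∑ i, ρseq p q i * Hmat N (k₀ + q) p i j) :
    ∀ q : ℕ, 1 ≤ q → sdLE (ρseq p₁ q) (ρseq p₂ q) := by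
  have hk0R : (0:ℝ) < (k₀:ℝ) := by exact_mod_cast hk₀
  have hNR : (1:ℝ) ≤ (N:ℝ) := by exact_mod_cast hN
  -- nonnegativity of the evolving distributions
  have hnonneg : ∀ p : ℝ, p₂ ≤ p → p ≤ 1 → ∀ q i, 0 ≤ ρseq p q i := by
    intro p hpl hpu q
    induction q with
    | zero => intro i; rw [hinit]; exact hρ₀nn i
    | succ q ih =>
      intro i
      rw [hrec]
      apply Finset.sum_nonneg
      intro l _
      refine mul_nonneg (ih l) (Hmat_nonneg N (k₀+q) (by omega) p (by linarith) ?_ l i)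
      have hkk : (k₀:ℝ) ≤ ((k₀+q : ℕ):ℝ) := by exact_mod_cast Nat.le_add_right k₀ q
      calc (N:ℝ) * (2-p) / ((k₀+q : ℕ):ℝ) ≤ (N:ℝ) * (2-p₂) / (k₀:ℝ) := by
            gcongr <;> first
              | linarith
              | positivity
              | exact mul_nonneg (by positivity) (by linarith)
        _ ≤ 1 := hcond
  have key : ∀ q : ℕ, sdLE (ρseq p₁ q) (ρseq p₂ q) := by
    intro q
    induction q with
    | zero => rw [hinit, hinit]; exact fun j => le_refl _
    | succ q ih =>
      intro j
      simp only [hrec]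
      rw [step_tail N (k₀+q) p₁ (ρseq p₁ q) j, step_tail N (k₀+q) p₂ (ρseq p₂ q) j]
      by_cases hj : 1 ≤ j.val
      · rw [if_pos hj, if_pos hj]
        have hkk : (k₀:ℝ) ≤ ((k₀+q : ℕ):ℝ) := by exact_mod_cast Nat.le_add_right k₀ q
        have hKpos : (0:ℝ) < ((k₀+q : ℕ):ℝ) := lt_of_lt_of_le hk0R hkk
        have hjN : (j.val : ℝ) ≤ (N:ℝ) := by
          have := j.isLt; exact_mod_cast Nat.le_of_lt_succ this
        have hjpos : (0:ℝ) < (j.val : ℝ) := by exact_mod_cast hj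
        set b₁ : ℝ := (j.val : ℝ) * (2 - p₁) / ((k₀+q : ℕ):ℝ) with hb₁
        set b₂ : ℝ := (j.val : ℝ) * (2 - p₂) / ((k₀+q : ℕ):ℝ) with hb₂
        have hb12 : b₁ ≤ b₂ := by
          rw [hb₁, hb₂]; gcongr <;> linarith
        have hb1nn : 0 ≤ b₁ := by
          rw [hb₁]; exact div_nonneg (mul_nonneg hjpos.le (by linarith)) hKpos.le
        have hb2nn : 0 ≤ b₂ := le_trans hb1nn hb12
        have hb2le1 : b₂ ≤ 1 := by
          rw [hb₂]
          calc (j.val : ℝ) * (2 - p₂) / ((k₀+q : ℕ):ℝ) ≤ (N:ℝ) * (2 - p₂) / (k₀:ℝ) := by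
                gcongr <;> first
                  | linarith
                  | positivity
                  | exact mul_nonneg (by positivity) (by linarith)
            _ ≤ 1 := hcond
        have t1 := tail_pred N (ρseq p₁ q) j hj
        have t2 := tail_pred N (ρseq p₂ q) j hj
        have ihj := ih j
        have ihm := ih (⟨j.val - 1, lt_of_le_of_lt (Nat.sub_le _ _) j.isLt⟩ : Fin (N+1))
        have hρ1 : 0 ≤ ρseq p₁ q (⟨j.val - 1, lt_of_le_of_lt (Nat.sub_le _ _) j.isLt⟩ : Fin (N+1)) :=
          hnonneg p₁ hpp.le hp₁ q _
        rw [t1, t2] at ihm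
        have e1 : b₁ * ρseq p₁ q (⟨j.val - 1, lt_of_le_of_lt (Nat.sub_le _ _) j.isLt⟩ : Fin (N+1)) ≤
            b₂ * ρseq p₁ q (⟨j.val - 1, lt_of_le_of_lt (Nat.sub_le _ _) j.isLt⟩ : Fin (N+1)) :=
          mul_le_mul_of_nonneg_right hb12 hρ1
        have e3 : b₂ * (ρseq p₁ q (⟨j.val - 1, lt_of_le_of_lt (Nat.sub_le _ _) j.isLt⟩ : Fin (N+1)) +
              ∑ i ∈ univ.filter (fun i => j ≤ i), ρseq p₁ q i) ≤
            b₂ * (ρseq p₂ q (⟨j.val - 1, lt_of_le_of_lt (Nat.sub_le _ _) j.isLt⟩ : Fin (N+1)) +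
              ∑ i ∈ univ.filter (fun i => j ≤ i), ρseq p₂ q i) :=
          mul_le_mul_of_nonneg_left ihm hb2nn
        have e2 : (1 - b₂) * (∑ i ∈ univ.filter (fun i => j ≤ i), ρseq p₁ q i) ≤
            (1 - b₂) * (∑ i ∈ univ.filter (fun i => j ≤ i), ρseq p₂ q i) :=
          mul_le_mul_of_nonneg_left ihj (by linarith)
        nlinarith [e1, e2, e3]
      · rw [if_neg hj, if_neg hj]
        have := ih j
        linarith
  intro q _
  exact key q
end
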